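/- With z_0, ..., z_{N+1} distinct, W(z) = ∏_{j=0}^{N+1}(z - z_j), and Θ(z) = Θ_∞ ∏_{r=1}^{N}(z - q_r) with the q_r pairwise distinct and distinct from all z_j, for any r, s ∈ {1, ..., N}: ∑_{j=0}^{N+1} Θ(z_j)/(W'(z_j)(z_j - q_r)(z_j - q_s)) = -δ_{r,s}·Θ'(q_r)/W(q_r). -/

import Mathlib

open Polynomial Finset

lemma key {n : ℕ} (z : Fin n → ℂ) (hz : Function.Injective z) (P : ℂ[X])
    (hP : P.degree < (n : WithBot ℕ)) (x : ℂ) (hx : ∀ j, x ≠ z j) :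
    P.eval x = (∏ k, (x - z k)) *
      ∑ j, ((derivative (∏ k, (X - C (z k)))).eval (z j))⁻¹ * (x - z j)⁻¹ * P.eval (z j) := by
  have hinj : Set.InjOn z (univ : Finset (Fin n)) := fun a _ b _ h => hz h
  have hdeg : P.degree < (#(univ : Finset (Fin n)) : WithBot ℕ) := by simpa
  have h1 := Lagrange.eq_interpolate (v := z) hinj hdeg
  have h2 := Lagrange.eval_interpolate_not_at_node (s := univ) (v := z) (x := x)
    (fun i => P.eval (z i)) (fun i _ => hx i)
  rw [← h1] at h2
  rw [h2, Lagrange.eval_nodal]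
  congr 1
  refine Finset.sum_congr rfl fun j _ => ?_
  rw [Lagrange.nodalWeight_eq_eval_derivative_nodal (Finset.mem_univ j), Lagrange.nodal]

lemma Wderiv_ne_zero {n : ℕ} (z : Fin n → ℂ) (hz : Function.Injective z) (j : Fin n) :
    (derivative (∏ k, (X - C (z k)))).eval (z j) ≠ 0 := by
  have hinj : Set.InjOn z (univ : Finset (Fin n)) := fun a _ b _ h => hz h
  have h := Lagrange.nodalWeight_ne_zero (s := univ) (v := z) hinj (Finset.mem_univ j)
  rw [Lagrange.nodalWeight_eq_eval_derivative_nodal (Finset.mem_univ j), Lagrange.nodal] at h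
  exact fun h0 => h (by rw [h0, inv_zero])

/-- With `z 0, ..., z (N+1)` distinct, `W = ∏ (X - z j)`, and
`Θ = Θ∞ ∏ (X - q r)` with the `q r` pairwise distinct and distinct from all `z j`,
for any `r s`: `∑ j Θ(z j)/(W'(z j)(z j - q r)(z j - q s)) = -δ_{r,s} Θ'(q r)/W(q r)`. -/
theorem stmt_3 (N : ℕ) (z : Fin (N + 2) → ℂ) (hz : Function.Injective z)
    (q : Fin N → ℂ) (hq : Function.Injective q)
    (Θinf : ℂ) (hΘinf : Θinf ≠ 0)
    (hqz : ∀ r j, q r ≠ z j)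
    (W Θ : Polynomial ℂ)
    (hW : W = ∏ j, (X - C (z j))) (hΘ : Θ = C Θinf * ∏ r, (X - C (q r)))
    (r s : Fin N) :
    ∑ j, Θ.eval (z j) / ((derivative W).eval (z j) * (z j - q r) * (z j - q s)) =
      -(if r = s then (derivative Θ).eval (q r) / W.eval (q r) else 0) := by
  subst hW
  have hD : ∀ j, (derivative (∏ k, (X - C (z k)))).eval (z j) ≠ 0 := Wderiv_ne_zero z hz
  have hWq : ∀ a : Fin N, (∏ k, (q a - z k)) ≠ 0 :=
    fun a => Finset.prod_ne_zero_iff.mpr fun j _ => sub_ne_zero.mpr (hqz a j)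
  have hWqeq : ∀ x : ℂ, (∏ j, (X - C (z j))).eval x = ∏ k, (x - z k) := by
    intro x; rw [eval_prod]; simp
  have hΘq : ∀ a : Fin N, Θ.eval (q a) = 0 := by
    intro a
    rw [hΘ, eval_mul, eval_prod]
    rw [Finset.prod_eq_zero (Finset.mem_univ a) (by simp), mul_zero]
  have hzq : ∀ (a : Fin N) j, z j - q a ≠ 0 := fun a j => sub_ne_zero.mpr fun h => hqz a j h.symm
  have hΘdeg : Θ.degree = (N : WithBot ℕ) := by
    rw [hΘ, degree_mul, degree_C hΘinf, degree_prod]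
    simp [degree_X_sub_C]
  have hΘne : Θ ≠ 0 := fun h => by simp [h] at hΘdeg
  by_cases hrs : r = s
  · subst hrs
    rw [if_pos rfl]
    obtain ⟨P, hP⟩ : (X - C (q r)) ∣ Θ := dvd_iff_isRoot.mpr (hΘq r)
    have hPdeg : P.degree < ((N + 2 : ℕ) : WithBot ℕ) := by
      have h1 : P ∣ Θ := Dvd.intro_left _ hP.symm
      have h2 := Polynomial.degree_le_of_dvd h1 hΘne
      rw [hΘdeg] at h2
      exact lt_of_le_of_lt h2 (by exact_mod_cast Nat.lt_add_of_pos_right two_pos)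
    have hkey := key z hz P hPdeg (q r) (fun j => hqz r j)
    have hΘ' : (derivative Θ).eval (q r) = P.eval (q r) := by
      rw [hP]; simp [derivative_mul]
    have hsum : ∀ j : Fin (N+2),
        Θ.eval (z j) / ((derivative (∏ k, (X - C (z k)))).eval (z j) * (z j - q r) * (z j - q r))
        = -(((derivative (∏ k, (X - C (z k)))).eval (z j))⁻¹ * (q r - z j)⁻¹ * P.eval (z j)) := by
      intro j
      have hΘz : Θ.eval (z j) = (z j - q r) * P.eval (z j) := by rw [hP]; simp
      have h1 := hD j
      have h2 := hzq r j
      have h3 : q r - z j ≠ 0 := fun h => h2 (by linear_combination -h)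
      rw [hΘz]
      field_simp
      ring
    rw [Finset.sum_congr rfl (fun j _ => hsum j), Finset.sum_neg_distrib, hWqeq, hΘ', hkey,
      mul_div_cancel_left₀ _ (hWq r)]
  · simp only [if_neg hrs, neg_zero]
    have hΘdeg' : Θ.degree < ((N + 2 : ℕ) : WithBot ℕ) := by
      rw [hΘdeg]; exact_mod_cast Nat.lt_add_of_pos_right two_pos
    have hS : ∀ a : Fin N,
        ∑ j, ((derivative (∏ k, (X - C (z k)))).eval (z j))⁻¹ * (q a - z j)⁻¹ * Θ.eval (z j)
          = 0 := by
      intro a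
      have hkey := key z hz Θ hΘdeg' (q a) (fun j => hqz a j)
      rw [hΘq a] at hkey
      rcases mul_eq_zero.mp hkey.symm with h | h
      · exact absurd h (hWq a)
      · exact h
    have hqrs : q r - q s ≠ 0 := sub_ne_zero.mpr fun h => hrs (hq h)
    have hsum : ∀ j : Fin (N+2),
        Θ.eval (z j) / ((derivative (∏ k, (X - C (z k)))).eval (z j) * (z j - q r) * (z j - q s))
        = (q r - q s)⁻¹ *
          ((((derivative (∏ k, (X - C (z k)))).eval (z j))⁻¹ * (q s - z j)⁻¹ * Θ.eval (z j)) -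
           (((derivative (∏ k, (X - C (z k)))).eval (z j))⁻¹ * (q r - z j)⁻¹ * Θ.eval (z j))) := by
      intro j
      have h1 := hD j
      have h2 := hzq r j
      have h3 := hzq s j
      have h4 : q r - z j ≠ 0 := fun h => h2 (by linear_combination -h)
      have h5 : q s - z j ≠ 0 := fun h => h3 (by linear_combination -h)
      field_simp
      ring
    rw [Finset.sum_congr rfl (fun j _ => hsum j), ← Finset.mul_sum, Finset.sum_sub_distrib,
      hS r, hS s, sub_zero, mul_zero]
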